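/- Suppose 0 < P(R = 0) < 1 and 0 < P(R = 1 | X, D) < 1 almost surely, and assume the conditional law of (X, D) given R = 0 is absolutely continuous with respect to the conditional law of (X, D) given R = 1, with Radon–Nikodym derivative w(X, D). Then for every η ∈ ℝ and γ ∈ (0,1): E[ P(R = 0 | X, D) · ( P(V_C < η | X, D, R = 1) − (1 − γ) ) ] = P(R = 0) · ( E[ w(X, D) · 1{V_C < η} | R = 1 ] − (1 − γ) ). -/

import Mathlib

open MeasureTheory ProbabilityTheory
open scoped ENNReal

open scoped NNReal

/-- The σ-algebra generated by the pair `(X, D)`. -/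
abbrev stmt8_mXD {Ω : Type*} {k : ℕ} (X : Ω → (Fin k → ℝ)) (D : Ω → ℝ) : MeasurableSpace Ω :=
  MeasurableSpace.comap (fun ω' => (X ω', D ω')) inferInstance

/-- with `w` the density of `Law(X,D | R = 0)` w.r.t. `Law(X,D | R = 1)`,
for every `η` and `γ ∈ (0,1)`:
`E[ P(R=0|X,D) · (P(V_C<η|X,D,R=1) − (1−γ)) ]
  = P(R=0) · ( E[w(X,D)·1{V_C<η} | R=1] − (1−γ) )`. -/
theorem stmt_8
    {Ω : Type*} [mΩ : MeasurableSpace Ω] [StandardBorelSpace Ω]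
    (P : Measure Ω) [IsProbabilityMeasure P]
    {k : ℕ} (X : Ω → (Fin k → ℝ)) (Y1 Y0 D R : Ω → ℝ)
    (hX : Measurable X) (hY1 : Measurable Y1) (hY0 : Measurable Y0)
    (hD : Measurable D) (hR : Measurable R)
    (hDbin : ∀ ω, D ω = 0 ∨ D ω = 1) (hRbin : ∀ ω, R ω = 0 ∨ R ω = 1)
    -- nonconformity score V_C = v(X, D, Y(1), Y(0))
    (v : (Fin k → ℝ) × ℝ × ℝ × ℝ → ℝ) (hv : Measurable v)
    (V : Ω → ℝ) (hV : V = fun ω => v (X ω, D ω, Y1 ω, Y0 ω))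
    -- 0 < P(R = 0) < 1
    (hpos0 : 0 < P {ω | R ω = 0}) (hpos1 : P {ω | R ω = 0} < 1)
    -- eR is (a version of) the response propensity P(R = 1 | X, D),
    -- with 0 < P(R = 1 | X, D) < 1 almost surely
    (eR : (Fin k → ℝ) → ℝ → ℝ) (heRmeas : Measurable fun p : (Fin k → ℝ) × ℝ => eR p.1 p.2)
    (heR : (fun ω => eR (X ω) (D ω)) =ᵐ[P]
      MeasureTheory.condExp (MeasurableSpace.comap (fun ω' => (X ω', D ω')) inferInstance) P
        (Set.indicator {ω' | R ω' = 1} (fun _ => (1 : ℝ))))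
    (heRbdd : ∀ᵐ ω ∂P, 0 < eR (X ω) (D ω) ∧ eR (X ω) (D ω) < 1)
    -- mC is (a version of) the conditional CDF of V_C given (X, D) on the responders
    (mC : ℝ → (Fin k → ℝ) → ℝ → ℝ)
    (hmCmeas : Measurable fun p : ℝ × (Fin k → ℝ) × ℝ => mC p.1 p.2.1 p.2.2)
    (hmCbdd : ∀ η x d, mC η x d ∈ Set.Icc (0 : ℝ) 1)
    (hmC : ∀ η : ℝ, (fun ω => mC η (X ω) (D ω)) =ᵐ[P[|{ω' | R ω' = 1}]]
      MeasureTheory.condExp (MeasurableSpace.comap (fun ω' => (X ω', D ω')) inferInstance)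
        (P[|{ω' | R ω' = 1}])
        (Set.indicator {ω' | V ω' < η} (fun _ => (1 : ℝ))))
    -- w is the Radon–Nikodym derivative of Law(X, D | R = 0) w.r.t. Law(X, D | R = 1)
    (w : (Fin k → ℝ) → ℝ → ℝ) (hwmeas : Measurable fun p : (Fin k → ℝ) × ℝ => w p.1 p.2)
    (hwnonneg : ∀ x d, 0 ≤ w x d)
    (hw : Measure.map (fun ω => (X ω, D ω)) (P[|{ω | R ω = 0}]) =
      (Measure.map (fun ω => (X ω, D ω)) (P[|{ω | R ω = 1}])).withDensity
        (fun p => ENNReal.ofReal (w p.1 p.2)))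
    (η : ℝ) (γ : ℝ) (hγ : γ ∈ Set.Ioo (0 : ℝ) 1) :
    (∫ ω, (1 - eR (X ω) (D ω)) * (mC η (X ω) (D ω) - (1 - γ)) ∂P) =
      (P {ω | R ω = 0}).toReal *
        ((∫ ω, w (X ω) (D ω) * (if V ω < η then (1 : ℝ) else 0) ∂(P[|{ω' | R ω' = 1}]))
          - (1 - γ)) := by
  classical
  set XD : Ω → (Fin k → ℝ) × ℝ := fun ω => (X ω, D ω) with hXD_def
  have hXD : Measurable XD := hX.prodMk hD
  have hm : stmt8_mXD X D ≤ mΩ := hXD.comap_le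
  have hXDm : Measurable[stmt8_mXD X D] XD := Measurable.of_comap_le le_rfl
  set s0 : Set Ω := {ω | R ω = 0} with hs0_def
  set s1 : Set Ω := {ω | R ω = 1} with hs1_def
  have hs0 : MeasurableSet s0 := hR (measurableSet_singleton 0)
  have hs1 : MeasurableSet s1 := hR (measurableSet_singleton 1)
  have hs1c : s1 = s0ᶜ := by
    ext ω
    simp only [hs0_def, hs1_def, Set.mem_setOf_eq, Set.mem_compl_iff]
    rcases hRbin ω with h | h <;> simp [h]
  have hP1pos : P s1 ≠ 0 := by
    rw [hs1c, measure_compl hs0 (measure_ne_top _ _), measure_univ]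
    intro h
    have := tsub_eq_zero_iff_le.mp h
    exact absurd this (not_le.mpr hpos1)
  haveI hprob0 : IsProbabilityMeasure (P[|s0]) := cond_isProbabilityMeasure hpos0.ne'
  haveI hprob1 : IsProbabilityMeasure (P[|s1]) := cond_isProbabilityMeasure hP1pos
  set c : ℝ := 1 - γ with hc_def
  set mCf : Ω → ℝ := fun ω => mC η (X ω) (D ω) with hmCf_def
  set wf : Ω → ℝ := fun ω => w (X ω) (D ω) with hwf_def
  have hmCη : Measurable (fun p : (Fin k → ℝ) × ℝ => mC η p.1 p.2) :=
    hmCmeas.comp (measurable_const.prodMk measurable_id)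
  have hmCf_m : Measurable[stmt8_mXD X D] mCf := hmCη.comp hXDm
  have hwf_m : Measurable[stmt8_mXD X D] wf := hwmeas.comp hXDm
  have hmCf_meas : Measurable mCf := hmCη.comp hXD
  have hwf_meas : Measurable wf := hwmeas.comp hXD
  have hVmeas : Measurable V := by
    rw [hV]; exact hv.comp (hX.prodMk (hD.prodMk (hY1.prodMk hY0)))
  have hVset : MeasurableSet {ω | V ω < η} := hVmeas measurableSet_Iio
  set h0 : Ω → ℝ := Set.indicator s0 (fun _ => (1 : ℝ)) with hh0_def
  set hVind : Ω → ℝ := Set.indicator {ω | V ω < η} (fun _ => (1 : ℝ)) with hVind_def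
  set g : Ω → ℝ := fun ω => mCf ω - c with hg_def
  -- integrability facts
  have h0_int : Integrable h0 P := (integrable_const (1 : ℝ)).indicator hs0
  have hg_sm : StronglyMeasurable[stmt8_mXD X D] g :=
    ((hmCf_m.sub (measurable_const : Measurable[stmt8_mXD X D] fun _ : Ω => c))).stronglyMeasurable
  have hg_bd : ∀ ω, ‖g ω‖ ≤ 1 + |c| := by
    intro ω
    have h1 := (hmCbdd η (X ω) (D ω)).1
    have h2 := (hmCbdd η (X ω) (D ω)).2
    have hgω : g ω = mC η (X ω) (D ω) - c := rfl
    rw [hgω]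
    simp only [Real.norm_eq_abs]
    calc |mC η (X ω) (D ω) - c| ≤ |mC η (X ω) (D ω)| + |c| := abs_sub _ _
      _ ≤ 1 + |c| := by
          have : |mC η (X ω) (D ω)| ≤ 1 := abs_le.mpr ⟨by linarith, h2⟩
          linarith
  have hgh0_int : Integrable (g * h0) P := by
    refine (integrable_const (1 + |c|)).mono'
      ((hg_sm.mono hm).aestronglyMeasurable.mul h0_int.1) ?_
    filter_upwards with ω
    have hh0 : ‖h0 ω‖ ≤ 1 := by
      rw [hh0_def]
      by_cases hω : ω ∈ s0 <;> simp [Set.indicator_apply, hω]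
    have hc0 : (0 : ℝ) ≤ 1 + |c| := by positivity
    calc ‖(g * h0) ω‖ = ‖g ω‖ * ‖h0 ω‖ := norm_mul _ _
      _ ≤ (1 + |c|) * 1 := mul_le_mul (hg_bd ω) hh0 (norm_nonneg _) hc0
      _ = 1 + |c| := mul_one _
  -- Step 1 : 1 - eR ∘ = condexp of indicator of s0
  have heR0 : (fun ω => 1 - eR (X ω) (D ω)) =ᵐ[P] P[h0|stmt8_mXD X D] := by
    have h1eq : Set.indicator s1 (fun _ => (1 : ℝ)) = fun ω => 1 - h0 ω := by
      funext ω
      rcases hRbin ω with h | h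
      · have hω0 : ω ∈ s0 := h
        have hω1 : ω ∉ s1 := by
          simp only [hs1_def, Set.mem_setOf_eq]; rw [h]; norm_num
        simp [Set.indicator_apply, hω0, hω1, hh0_def]
      · have hω0 : ω ∉ s0 := by
          simp only [hs0_def, Set.mem_setOf_eq]; rw [h]; norm_num
        have hω1 : ω ∈ s1 := h
        simp [Set.indicator_apply, hω0, hω1, hh0_def]
    have heR' : (fun ω => eR (X ω) (D ω)) =ᵐ[P]
        P[Set.indicator s1 (fun _ => (1 : ℝ))|stmt8_mXD X D] := heR
    have hsub : P[Set.indicator s1 (fun _ => (1 : ℝ))|stmt8_mXD X D]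
        =ᵐ[P] fun ω => 1 - (P[h0|stmt8_mXD X D]) ω := by
      rw [h1eq]
      have heq : (fun ω => 1 - h0 ω) = (fun _ : Ω => (1 : ℝ)) - h0 := rfl
      rw [heq]
      refine (condExp_sub (integrable_const 1) h0_int (stmt8_mXD X D)).trans ?_
      rw [condExp_const (μ := P) hm (1 : ℝ)]
      exact Filter.EventuallyEq.rfl
    filter_upwards [heR', hsub] with ω h1 h2
    have : eR (X ω) (D ω) = 1 - (P[h0|stmt8_mXD X D]) ω := by rw [h1]; exact h2
    rw [this]; ring
  -- Step 2 : LHS = ∫ g * h0 dP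
  have step2 : (∫ ω, (1 - eR (X ω) (D ω)) * g ω ∂P) = ∫ ω, (g * h0) ω ∂P := by
    have hpull : P[g * h0|stmt8_mXD X D] =ᵐ[P] g * P[h0|stmt8_mXD X D] :=
      condExp_mul_of_stronglyMeasurable_left hg_sm hgh0_int h0_int
    calc (∫ ω, (1 - eR (X ω) (D ω)) * g ω ∂P)
        = ∫ ω, (g * P[h0|stmt8_mXD X D]) ω ∂P := by
          refine integral_congr_ae ?_
          filter_upwards [heR0] with ω hω
          simp only [Pi.mul_apply]
          rw [← hω]; ring
      _ = ∫ ω, (P[g * h0|stmt8_mXD X D]) ω ∂P := integral_congr_ae hpull.symm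
      _ = ∫ ω, (g * h0) ω ∂P := integral_condExp hm
  -- Step 3 : ∫ g*h0 dP = (P s0).toReal * ∫ g dP0
  have step3 : (∫ ω, (g * h0) ω ∂P) = (P s0).toReal * ∫ ω, g ω ∂(P[|s0]) := by
    have hgind : (g * h0) = Set.indicator s0 g := by
      funext ω
      by_cases hω : ω ∈ s0 <;> simp [Set.indicator_apply, hω, hh0_def]
    rw [hgind, integral_indicator hs0]
    rw [ProbabilityTheory.cond, integral_smul_measure, smul_eq_mul, ← mul_assoc,
      ENNReal.toReal_inv, mul_inv_cancel₀, one_mul]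
    exact ENNReal.toReal_ne_zero.mpr ⟨hpos0.ne', measure_ne_top _ _⟩
  -- mCf integrable under any probability measure on Ω
  have hmCf_int : ∀ (μ : Measure Ω) [IsProbabilityMeasure μ], Integrable mCf μ := by
    intro μ _
    refine Integrable.mono' (integrable_const (μ := μ) (1 : ℝ))
      (hmCf_meas.aestronglyMeasurable (μ := μ)) ?_
    filter_upwards with ω
    have h1 := (hmCbdd η (X ω) (D ω)).1
    have h2 := (hmCbdd η (X ω) (D ω)).2
    have : mCf ω = mC η (X ω) (D ω) := rfl
    rw [this]
    simp only [Real.norm_eq_abs]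
    rw [abs_of_nonneg h1]
    exact h2
  -- Step 4 : ∫ g dP0 = ∫ mCf dP0 - c
  have step4 : (∫ ω, g ω ∂(P[|s0])) = (∫ ω, mCf ω ∂(P[|s0])) - c := by
    have : (∫ ω, g ω ∂(P[|s0])) = ∫ ω, mCf ω - c ∂(P[|s0]) := rfl
    rw [this, integral_sub (hmCf_int _) (integrable_const c), integral_const]
    simp
  -- Step 5 : ∫ mCf dP0 = ∫ wf * mCf dP1
  have key_map : ∀ (f : (Fin k → ℝ) × ℝ → ℝ), Measurable f →
      (∫ p, f p ∂(Measure.map XD (P[|s0]))) = ∫ p, w p.1 p.2 * f p ∂(Measure.map XD (P[|s1])) := by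
    intro f hf
    rw [hw]
    have hwnn : Measurable fun p : (Fin k → ℝ) × ℝ => Real.toNNReal (w p.1 p.2) :=
      hwmeas.real_toNNReal
    have hcoe : (fun p : (Fin k → ℝ) × ℝ => ENNReal.ofReal (w p.1 p.2))
        = fun p => ((Real.toNNReal (w p.1 p.2) : ℝ≥0) : ℝ≥0∞) := rfl
    rw [hcoe, integral_withDensity_eq_integral_smul hwnn f]
    refine integral_congr_ae ?_
    filter_upwards with p
    rw [NNReal.smul_def, smul_eq_mul, Real.coe_toNNReal _ (hwnonneg _ _)]
  have step5 : (∫ ω, mCf ω ∂(P[|s0])) = ∫ ω, wf ω * mCf ω ∂(P[|s1]) := by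
    have h1 : (∫ ω, mCf ω ∂(P[|s0]))
        = ∫ p, mC η p.1 p.2 ∂(Measure.map XD (P[|s0])) :=
      (integral_map hXD.aemeasurable hmCη.aestronglyMeasurable).symm
    have h2 : (∫ p, w p.1 p.2 * mC η p.1 p.2 ∂(Measure.map XD (P[|s1])))
        = ∫ ω, wf ω * mCf ω ∂(P[|s1]) :=
      integral_map hXD.aemeasurable (hwmeas.mul hmCη).aestronglyMeasurable
    rw [h1, key_map _ hmCη, h2]
  -- integrability of wf under P1
  have hwf_int : Integrable wf (P[|s1]) := by
    have hmap : Integrable (fun p : (Fin k → ℝ) × ℝ => w p.1 p.2) (Measure.map XD (P[|s1])) := by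
      constructor
      · exact hwmeas.aestronglyMeasurable
      · rw [hasFiniteIntegral_iff_norm]
        have heq : ∀ p : (Fin k → ℝ) × ℝ, ENNReal.ofReal ‖w p.1 p.2‖
            = ENNReal.ofReal (w p.1 p.2) := by
          intro p; rw [Real.norm_eq_abs, abs_of_nonneg (hwnonneg _ _)]
        calc ∫⁻ p, ENNReal.ofReal ‖w p.1 p.2‖ ∂(Measure.map XD (P[|s1]))
            = ∫⁻ p, ENNReal.ofReal (w p.1 p.2) ∂(Measure.map XD (P[|s1])) :=
              lintegral_congr heq
          _ = ((Measure.map XD (P[|s1])).withDensity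
                (fun p => ENNReal.ofReal (w p.1 p.2))) Set.univ := by
              rw [withDensity_apply _ MeasurableSet.univ, setLIntegral_univ]
          _ = (Measure.map XD (P[|s0])) Set.univ := by rw [hw]
          _ = 1 := by
              haveI : IsProbabilityMeasure (Measure.map XD (P[|s0])) :=
                Measure.isProbabilityMeasure_map hXD.aemeasurable
              exact measure_univ
          _ < ⊤ := ENNReal.one_lt_top
    exact (integrable_map_measure hwmeas.aestronglyMeasurable hXD.aemeasurable).mp hmap
  -- Step 6 : RHS inner integral = ∫ wf * mCf dP1
  have hite : (fun ω => w (X ω) (D ω) * (if V ω < η then (1 : ℝ) else 0)) = wf * hVind := by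
    funext ω
    by_cases hω : V ω < η <;>
      simp [hVind_def, Set.indicator_apply, Set.mem_setOf_eq, hω, hwf_def]
  have hVind_int : Integrable hVind (P[|s1]) := (integrable_const (1 : ℝ)).indicator hVset
  have hwfVind_int : Integrable (wf * hVind) (P[|s1]) := by
    refine hwf_int.mono' (hwf_int.1.mul hVind_int.1) ?_
    filter_upwards with ω
    have hind : ‖hVind ω‖ ≤ 1 := by
      rw [hVind_def]
      by_cases hω : ω ∈ {ω' | V ω' < η} <;> simp [Set.indicator_apply, hω]
    calc ‖(wf * hVind) ω‖ = ‖wf ω‖ * ‖hVind ω‖ := norm_mul _ _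
      _ ≤ ‖wf ω‖ * 1 := mul_le_mul_of_nonneg_left hind (norm_nonneg _)
      _ = wf ω := by rw [mul_one, Real.norm_eq_abs, abs_of_nonneg (hwnonneg _ _)]
  have step6 : (∫ ω, (wf * hVind) ω ∂(P[|s1])) = ∫ ω, wf ω * mCf ω ∂(P[|s1]) := by
    have hmC' : (fun ω => mC η (X ω) (D ω)) =ᵐ[P[|s1]]
        (P[|s1])[hVind|stmt8_mXD X D] := hmC η
    have hpull : (P[|s1])[wf * hVind|stmt8_mXD X D]
        =ᵐ[P[|s1]] wf * (P[|s1])[hVind|stmt8_mXD X D] :=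
      condExp_mul_of_stronglyMeasurable_left hwf_m.stronglyMeasurable hwfVind_int hVind_int
    calc (∫ ω, (wf * hVind) ω ∂(P[|s1]))
        = ∫ ω, ((P[|s1])[wf * hVind|stmt8_mXD X D]) ω ∂(P[|s1]) := (integral_condExp hm).symm
      _ = ∫ ω, (wf * (P[|s1])[hVind|stmt8_mXD X D]) ω ∂(P[|s1]) := integral_congr_ae hpull
      _ = ∫ ω, wf ω * mCf ω ∂(P[|s1]) := by
          refine integral_congr_ae ?_
          filter_upwards [hmC'] with ω hω
          simp only [Pi.mul_apply]
          rw [← hω]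
  -- conclude
  have lhs_eq : (∫ ω, (1 - eR (X ω) (D ω)) * (mC η (X ω) (D ω) - c) ∂P)
      = (P s0).toReal * ((∫ ω, wf ω * mCf ω ∂(P[|s1])) - c) := by
    calc (∫ ω, (1 - eR (X ω) (D ω)) * (mC η (X ω) (D ω) - c) ∂P)
        = ∫ ω, (1 - eR (X ω) (D ω)) * g ω ∂P := rfl
      _ = ∫ ω, (g * h0) ω ∂P := step2
      _ = (P s0).toReal * ∫ ω, g ω ∂(P[|s0]) := step3
      _ = (P s0).toReal * ((∫ ω, mCf ω ∂(P[|s0])) - c) := by rw [step4]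
      _ = (P s0).toReal * ((∫ ω, wf ω * mCf ω ∂(P[|s1])) - c) := by rw [step5]
  rw [lhs_eq, hite, step6]
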